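/- The point stabilizer of (1:-ξ^a:0:0:0) in H = ⟨g1,g2⟩ ≅ Z/5 × Z/5 is the cyclic subgroup of order 5 generated by g1·g2^{-1}. -/
import Mathlib


open Matrix

/-- `ξ = e^{2πi/5}`. -/
noncomputable def ξ : ℂ := Complex.exp (2 * Real.pi * Complex.I / 5)

lemma ξ_ne_zero : ξ ≠ 0 := Complex.exp_ne_zero _

/-- `g₁ = diag(1, ξ, ξ², ξ³, ξ⁴)` as an element of `GL(5, ℂ)`. -/
noncomputable def g1GL : GL (Fin 5) ℂ :=
  Matrix.GeneralLinearGroup.mkOfDetNeZero (Matrix.diagonal fun i => ξ ^ (i : ℕ))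
    (by
      rw [Matrix.det_diagonal]
      exact Finset.prod_ne_zero_iff.mpr fun i _ => pow_ne_zero _ ξ_ne_zero)

/-- `g₂ = diag(1, ξ, ξ³, ξ, 1)` as an element of `GL(5, ℂ)`. -/
noncomputable def g2GL : GL (Fin 5) ℂ :=
  Matrix.GeneralLinearGroup.mkOfDetNeZero (Matrix.diagonal fun i => ξ ^ (![0, 1, 3, 1, 0] i : ℕ))
    (by
      rw [Matrix.det_diagonal]
      exact Finset.prod_ne_zero_iff.mpr fun i _ => pow_ne_zero _ ξ_ne_zero)

/-- The group `H = ⟨g₁, g₂⟩ ≅ ℤ/5 × ℤ/5`.  (The only scalar matrix in `H` is the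
identity, so this copy of `H` in `GL(5, ℂ)` is isomorphic to its image in `PGL(5, ℂ)`.) -/
noncomputable def H : Subgroup (GL (Fin 5) ℂ) := Subgroup.closure {g1GL, g2GL}

/-- The point `(1 : -ξ^a : 0 : 0 : 0)` of `ℂP⁴`, as a homogeneous coordinate vector. -/
noncomputable def pt (a : Fin 5) : Fin 5 → ℂ := ![1, -ξ ^ (a : ℕ), 0, 0, 0]

-- auxiliary
lemma ξ_prim : IsPrimitiveRoot ξ 5 := by
  simpa [ξ] using Complex.isPrimitiveRoot_exp 5 (by norm_num)

lemma ξ_pow5 : ξ ^ 5 = 1 := ξ_prim.pow_eq_one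

lemma ξ_pow_iff (n : ℕ) : ξ ^ n = 1 ↔ 5 ∣ n := ξ_prim.pow_eq_one_iff_dvd n

lemma g1_coe : (g1GL : Matrix (Fin 5) (Fin 5) ℂ) = Matrix.diagonal (fun i : Fin 5 => ξ ^ (i : ℕ)) := rfl
lemma g2_coe : (g2GL : Matrix (Fin 5) (Fin 5) ℂ) =
    Matrix.diagonal (fun i : Fin 5 => ξ ^ (![0, 1, 3, 1, 0] i : ℕ)) := rfl

lemma g_comm : Commute g1GL g2GL := by
  apply Units.ext
  show (g1GL : Matrix (Fin 5) (Fin 5) ℂ) * g2GL = (g2GL : Matrix (Fin 5) (Fin 5) ℂ) * g1GL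
  rw [g1_coe, g2_coe, diagonal_mul_diagonal, diagonal_mul_diagonal,
    diagonal_eq_diagonal_iff]
  intro i; ring

lemma pow_coe (g : GL (Fin 5) ℂ) (n : ℕ) :
    ((g ^ n : GL (Fin 5) ℂ) : Matrix (Fin 5) (Fin 5) ℂ) = (g : Matrix (Fin 5) (Fin 5) ℂ) ^ n :=
  Units.val_pow_eq_pow_val g n

lemma g1_pow5 : g1GL ^ 5 = 1 := by
  apply Units.ext
  rw [pow_coe, g1_coe, diagonal_pow]
  show _ = (1 : Matrix (Fin 5) (Fin 5) ℂ)
  rw [← diagonal_one, diagonal_eq_diagonal_iff]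
  intro i
  rw [Pi.pow_apply, ← pow_mul, mul_comm, pow_mul, ξ_pow5, one_pow]

lemma g2_pow5 : g2GL ^ 5 = 1 := by
  apply Units.ext
  rw [pow_coe, g2_coe, diagonal_pow]
  show _ = (1 : Matrix (Fin 5) (Fin 5) ℂ)
  rw [← diagonal_one, diagonal_eq_diagonal_iff]
  intro i
  rw [Pi.pow_apply, ← pow_mul, mul_comm, pow_mul, ξ_pow5, one_pow]

lemma ξ_ne_one : ξ ≠ 1 := ξ_prim.ne_one (by norm_num)

lemma mem_H_pow (h : GL (Fin 5) ℂ) (hh : h ∈ H) : ∃ m n : ℕ, h = g1GL ^ m * g2GL ^ n := by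
  induction hh using Subgroup.closure_induction with
  | mem x hx =>
    rcases hx with hx | hx
    · exact ⟨1, 0, by simp [hx]⟩
    · exact ⟨0, 1, by simp [Set.mem_singleton_iff.mp hx]⟩
  | one => exact ⟨0, 0, by simp⟩
  | mul x y hx hy ihx ihy =>
    obtain ⟨m, n, rfl⟩ := ihx; obtain ⟨m', n', rfl⟩ := ihy
    refine ⟨m + m', n + n', ?_⟩
    rw [pow_add, pow_add]
    exact (g_comm.pow_pow m' n).symm.mul_mul_mul_comm _ _
  | inv x hx ihx =>
    obtain ⟨m, n, rfl⟩ := ihx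
    refine ⟨4 * m, 4 * n, ?_⟩
    have h1 : g1GL ^ (4 * m) = (g1GL ^ m)⁻¹ := by
      apply eq_inv_of_mul_eq_one_left
      rw [← pow_add]
      have : 4 * m + m = 5 * m := by ring
      rw [this, pow_mul, g1_pow5, one_pow]
    have h2 : g2GL ^ (4 * n) = (g2GL ^ n)⁻¹ := by
      apply eq_inv_of_mul_eq_one_left
      rw [← pow_add]
      have : 4 * n + n = 5 * n := by ring
      rw [this, pow_mul, g2_pow5, one_pow]
    rw [_root_.mul_inv_rev, h1, h2]
    exact ((g_comm.pow_pow m n).inv_inv.symm).eq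

lemma matrix_pow_pow (m n : ℕ) :
    ((g1GL ^ m * g2GL ^ n : GL (Fin 5) ℂ) : Matrix (Fin 5) (Fin 5) ℂ)
      = Matrix.diagonal (fun i : Fin 5 => (ξ ^ (i : ℕ)) ^ m * (ξ ^ (![0,1,3,1,0] i : ℕ)) ^ n) := by
  rw [Units.val_mul, pow_coe, pow_coe, g1_coe, g2_coe, diagonal_pow, diagonal_pow,
    diagonal_mul_diagonal]
  rfl

lemma mulVec_eq (a : Fin 5) (m n : ℕ) (hd : 5 ∣ m + n) :
    ((g1GL ^ m * g2GL ^ n : GL (Fin 5) ℂ) : Matrix (Fin 5) (Fin 5) ℂ).mulVec (pt a) = pt a := by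
  have hmn : ξ ^ m * ξ ^ n = 1 := by rw [← pow_add]; exact (ξ_pow_iff _).mpr hd
  rw [matrix_pow_pow]
  funext i
  rw [mulVec_diagonal]
  fin_cases i <;> simp [pt] <;> ring_nf <;>
    simp [← pow_add, (ξ_pow_iff _).mpr hd]

lemma span_forward (a : Fin 5) (m n : ℕ)
    (hsp : ((g1GL ^ m * g2GL ^ n : GL (Fin 5) ℂ) : Matrix (Fin 5) (Fin 5) ℂ).mulVec (pt a) ∈
      Submodule.span ℂ ({pt a} : Set (Fin 5 → ℂ))) : 5 ∣ m + n := by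
  rw [matrix_pow_pow] at hsp
  obtain ⟨c, hc⟩ := Submodule.mem_span_singleton.mp hsp
  have h0 := congrFun hc 0
  have h1 := congrFun hc 1
  simp [pt, mulVec_diagonal, Pi.smul_apply, smul_eq_mul] at h0 h1
  subst h0
  rw [← ξ_pow_iff, pow_add]
  have ha : (ξ : ℂ) ^ (a : ℕ) ≠ 0 := pow_ne_zero _ ξ_ne_zero
  rcases h1 with h1 | h1
  · exact h1.symm
  · exact absurd h1.1 ξ_ne_zero

lemma mem_K_of (m n : ℕ) (hd : 5 ∣ m + n) :
    g1GL ^ m * g2GL ^ n ∈ Subgroup.closure ({g1GL * g2GL⁻¹} : Set (GL (Fin 5) ℂ)) := by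
  have hmn : g2GL ^ (m + n) = 1 := by
    obtain ⟨t, ht⟩ := hd
    rw [ht, pow_mul, g2_pow5, one_pow]
  have key : (g1GL * g2GL⁻¹) ^ m = g1GL ^ m * g2GL ^ n := by
    calc (g1GL * g2GL⁻¹) ^ m = g1GL ^ m * (g2GL⁻¹) ^ m := g_comm.inv_right.mul_pow m
      _ = g1GL ^ m * (g2GL ^ m)⁻¹ := by rw [inv_pow]
      _ = g1GL ^ m * ((g2GL ^ m)⁻¹ * g2GL ^ (m + n)) := by rw [hmn, mul_one]
      _ = g1GL ^ m * g2GL ^ n := by rw [pow_add, inv_mul_cancel_left]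
  rw [← key]
  exact pow_mem (Subgroup.subset_closure (Set.mem_singleton _)) m

lemma g2_inv_eq : g2GL⁻¹ = g2GL ^ 4 := by
  apply inv_eq_of_mul_eq_one_left
  calc g2GL ^ 4 * g2GL = g2GL ^ 5 := (pow_succ g2GL 4).symm
    _ = 1 := g2_pow5

lemma fix_of_memK (a : Fin 5) (h : GL (Fin 5) ℂ)
    (hh : h ∈ Subgroup.closure ({g1GL * g2GL⁻¹} : Set (GL (Fin 5) ℂ))) :
    (h : Matrix (Fin 5) (Fin 5) ℂ).mulVec (pt a) = pt a := by
  induction hh using Subgroup.closure_induction with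
  | mem x hx =>
    rw [Set.mem_singleton_iff.mp hx, g2_inv_eq, ← pow_one g1GL]
    exact mulVec_eq a 1 4 (by norm_num)
  | one => rw [Units.val_one, Matrix.one_mulVec]
  | mul x y hx hy ihx ihy =>
    rw [Units.val_mul, ← Matrix.mulVec_mulVec, ihy, ihx]
  | inv x hx ihx =>
    conv_lhs => rw [← ihx]
    rw [Matrix.mulVec_mulVec, ← Units.val_mul, inv_mul_cancel, Units.val_one,
      Matrix.one_mulVec]

lemma k_pow5 : (g1GL * g2GL⁻¹) ^ 5 = 1 := by
  rw [g_comm.inv_right.mul_pow, inv_pow, g1_pow5, g2_pow5, inv_one, one_mul]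

lemma k_ne_one : g1GL * g2GL⁻¹ ≠ 1 := by
  intro hk
  have hg : g1GL = g2GL := by
    rw [← mul_inv_eq_one]; exact hk
  have h22 := congrArg (fun u : GL (Fin 5) ℂ => (u : Matrix (Fin 5) (Fin 5) ℂ) 2 2) hg
  simp only [g1_coe, g2_coe, Matrix.diagonal_apply_eq] at h22
  have : (ξ : ℂ) ^ (2 : ℕ) = ξ ^ (3 : ℕ) := by simpa using h22
  have h3 : (ξ : ℂ) ^ (3 : ℕ) = ξ ^ (2 : ℕ) * ξ := by ring
  rw [h3] at this
  have h1 : (ξ : ℂ) ^ (2:ℕ) * 1 = ξ ^ (2:ℕ) * ξ := by rw [mul_one]; exact this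
  exact ξ_ne_one (mul_left_cancel₀ (pow_ne_zero 2 ξ_ne_zero) h1).symm

lemma K_cyclic : IsCyclic (Subgroup.closure ({g1GL * g2GL⁻¹} : Set (GL (Fin 5) ℂ))) := by
  rw [← Subgroup.zpowers_eq_closure]
  constructor
  refine ⟨⟨g1GL * g2GL⁻¹, Subgroup.mem_zpowers _⟩, ?_⟩
  rintro ⟨x, hx⟩
  obtain ⟨n, hn⟩ := Subgroup.mem_zpowers_iff.mp hx
  exact ⟨n, Subtype.ext (by rw [SubgroupClass.coe_zpow]; exact hn)⟩

lemma K_card : Nat.card (Subgroup.closure ({g1GL * g2GL⁻¹} : Set (GL (Fin 5) ℂ))) = 5 := by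
  rw [← Subgroup.zpowers_eq_closure, Nat.card_zpowers]
  haveI : Fact (Nat.Prime 5) := ⟨by norm_num⟩
  exact orderOf_eq_prime k_pow5 k_ne_one

/-- The stabilizer in `H = ⟨g₁, g₂⟩ ≅ ℤ/5 × ℤ/5` of the projective point
`(1 : -ξ^a : 0 : 0 : 0)` (i.e. those `h ∈ H` taking the homogeneous coordinate vector to
a scalar multiple of itself) is the cyclic subgroup of order 5 generated by `g₁·g₂⁻¹`. -/
theorem stabilizer_eq_cyclic (a : Fin 5) :
    (∀ h ∈ H, ((h : Matrix (Fin 5) (Fin 5) ℂ).mulVec (pt a) ∈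
        Submodule.span ℂ ({pt a} : Set (Fin 5 → ℂ)) ↔ h ∈ Subgroup.closure {g1GL * g2GL⁻¹})) ∧
    IsCyclic (Subgroup.closure {g1GL * g2GL⁻¹} : Subgroup (GL (Fin 5) ℂ)) ∧
    Nat.card (Subgroup.closure {g1GL * g2GL⁻¹} : Subgroup (GL (Fin 5) ℂ)) = 5 := by
  refine ⟨?_, K_cyclic, K_card⟩
  intro h hh
  constructor
  · intro hsp
    obtain ⟨m, n, rfl⟩ := mem_H_pow h hh
    exact mem_K_of m n (span_forward a m n hsp)
  · intro hK
    rw [fix_of_memK a h hK]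
    exact Submodule.mem_span_singleton_self _
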